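/- Let Φ be a finite, reduced, crystallographic root system (spanning a real root pairing with nonempty set of roots). For any finite family of roots β₁, …, β_n of Φ (n ≥ 0), there exists a root α ∈ Φ such that the sum of Cartan integers Σ_{j=1}^{n} ⟨α, βⱼ∨⟩ is an even integer, where ⟨α, β∨⟩ = 2(α, β)/(β, β) denotes the integer pairing of the root α with the coroot of β. -/

import Mathlib

/-- A root system (the former Mathlib structure): a root pairing whose roots and coroots span
their ambient modules. -/
structure RootSystem (ι R M N : Type*) [CommRing R] [AddCommGroup M] [Module R M]
    [AddCommGroup N] [Module R N] extends RootPairing ι R M N where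
  span_root_eq_top : Submodule.span R (Set.range root) = ⊤
  span_coroot_eq_top : Submodule.span R (Set.range coroot) = ⊤

set_option maxHeartbeats 1000000

open Set Function

/-- Strict Cauchy–Schwarz for the root form: for linearly independent roots the
product of the two Cartan pairings (the Coxeter weight) is `< 4`. -/
lemma aux_coxeterWeight_lt_four {ι M N : Type*} [AddCommGroup M] [Module ℝ M]
    [AddCommGroup N] [Module ℝ N] [Fintype ι] (P : RootSystem ι ℝ M N) (i j : ι)
    (h : LinearIndependent ℝ ![P.toRootPairing.root i, P.toRootPairing.root j]) :
    P.toRootPairing.pairing i j * P.toRootPairing.pairing j i < 4 := by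
  set Q := P.toRootPairing with hQdef
  let IB : Q.InvariantForm := ⟨Q.RootForm, Q.rootForm_symmetric, fun k =>
    (Q.rootForm_pos_of_ne_zero (Submodule.subset_span ⟨k, rfl⟩) (Q.ne_zero k)).ne',
    Q.rootForm_reflection_reflection_apply⟩
  set B := Q.RootForm with hBdef
  set a := B (Q.root i) (Q.root i) with hadef
  set b := B (Q.root i) (Q.root j) with hbdef
  set c := B (Q.root j) (Q.root j) with hcdef
  have ha : 0 < a := Q.rootForm_pos_of_ne_zero (Submodule.subset_span ⟨i, rfl⟩) (Q.ne_zero i)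
  have hc : 0 < c := Q.rootForm_pos_of_ne_zero (Submodule.subset_span ⟨j, rfl⟩) (Q.ne_zero j)
  have hsym : B (Q.root j) (Q.root i) = b := by
    rw [hbdef]
    exact (Q.rootForm_symmetric.eq (Q.root j) (Q.root i))
  -- the vector `c • αᵢ - b • αⱼ` is nonzero and lies in the root span
  set v : M := c • Q.root i - b • Q.root j with hvdef
  have hv0 : v ≠ 0 := by
    intro hv
    have h' := (LinearIndependent.pair_iff.mp h c (-b) (by
      rw [neg_smul, ← sub_eq_add_neg, ← hvdef, hv])).1
    exact hc.ne' h'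
  have hvspan : v ∈ Q.rootSpan ℝ := by
    apply Submodule.sub_mem
    · exact Submodule.smul_mem _ _ (Submodule.subset_span ⟨i, rfl⟩)
    · exact Submodule.smul_mem _ _ (Submodule.subset_span ⟨j, rfl⟩)
  have hpos : 0 < B v v := Q.rootForm_pos_of_ne_zero hvspan hv0
  have hexp : B v v = c * (c * a - b * b) := by
    rw [hvdef]
    simp only [map_sub, map_smul, LinearMap.sub_apply, LinearMap.smul_apply, smul_eq_mul,
      ← hadef, ← hbdef, ← hcdef, hsym]
    ring
  have hCS : b * b < a * c := by nlinarith
  have h1 : 2 * b = Q.pairing i j * c :=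
    IB.two_mul_apply_root_root i j
  have h2 : 2 * b = Q.pairing j i * a := by
    rw [← hsym]
    exact IB.two_mul_apply_root_root j i
  have h3 : Q.pairing i j * Q.pairing j i * (a * c) = 4 * (b * b) := by
    linear_combination (-(Q.pairing j i * a)) * h1 + (-(2 * b)) * h2
  nlinarith [mul_pos ha hc]

/-- Corollary (trivalpha), root-theoretic content: in a finite, reduced, crystallographic
root system, for any finite family of roots `β₁, …, βₙ` there exists a root `α` such that the
sum of Cartan integers `Σⱼ ⟨α, βⱼ∨⟩` is an even integer. -/
theorem exists_root_even_pairing_sum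
    {ι M N : Type*} [AddCommGroup M] [Module ℝ M] [AddCommGroup N] [Module ℝ N]
    [Finite ι] [Nonempty ι]
    (P : RootSystem ι ℝ M N)
    (hcrys : P.toRootPairing.IsCrystallographic)
    (hred : P.toRootPairing.IsReduced)
    (n : ℕ) (β : Fin n → ι) :
    ∃ α : ι, ∃ m : ℤ, ∑ j : Fin n, P.toRootPairing.pairing α (β j) = 2 * (m : ℝ) := by
  classical
  have : Fintype ι := Fintype.ofFinite ι
  set Q := P.toRootPairing with hQdef
  letI : Q.IsCrystallographic := hcrys
  choose z hz using (fun i j => ⟨Q.pairingIn ℤ i j, by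
    rw [← Q.algebraMap_pairingIn ℤ i j, algebraMap_int_eq, eq_intCast]⟩ :
    ∀ i j, ∃ m : ℤ, (m : ℝ) = Q.pairing i j)
  -- hz : ∀ i j, (z i j : ℝ) = Q.pairing i j
  set S : ι → ℤ := fun a => ∑ t, z a (β t) with hSdef
  have hSsum : ∀ a : ι, ∑ t : Fin n, Q.pairing a (β t) = (S a : ℝ) := by
    intro a
    rw [hSdef]
    push_cast
    exact Finset.sum_congr rfl fun t _ => (hz a (β t)).symm
  by_contra hcon
  push_neg at hcon
  have hodd : ∀ a : ι, Odd (S a) := by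
    intro a
    rcases Int.even_or_odd (S a) with ⟨r, hr⟩ | h
    · exact absurd (by rw [hSsum a, hr]; push_cast; ring) (hcon a r)
    · exact h
  obtain ⟨i⟩ := ‹Nonempty ι›
  have hex : ∃ t : Fin n, Odd (z i (β t)) := by
    by_contra hev
    push_neg at hev
    simp only [Int.not_odd_iff_even] at hev
    have heven : Even (S i) := Finset.even_sum _ fun t _ => hev t
    exact (Int.not_odd_iff_even.mpr heven) (hodd i)
  obtain ⟨t, ht⟩ := hex
  set j := β t with hjdef
  -- the pairing of i with j is an odd integer, in particular not 0, ±2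
  have hoddz : z i j % 2 = 1 := Int.odd_iff.mp ht
  have hzne2 : z i j ≠ 2 := by omega
  have hznem2 : z i j ≠ -2 := by omega
  have hzne0 : z i j ≠ 0 := by omega
  -- roots i and j are linearly independent
  have hli : LinearIndependent ℝ ![Q.root i, Q.root j] := by
    by_contra hdep
    rcases hred.eq_or_eq_neg i j hdep with he | he
    · have h2 : Q.pairing i j = 2 := by
        rw [show Q.pairing i j = Q.coroot' j (Q.root i) from rfl, he]
        simp
      exact hzne2 (by exact_mod_cast (hz i j).trans h2)
    · have h2 : Q.pairing i j = -2 := by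
        rw [show Q.pairing i j = Q.coroot' j (Q.root i) from rfl, he, map_neg]
        simp
      exact hznem2 (by exact_mod_cast (hz i j).trans h2)
  -- Coxeter weight bounds
  have hcs : Q.pairing i j * Q.pairing j i < 4 := aux_coxeterWeight_lt_four P i j hli
  have hnn : 0 ≤ Q.pairing i j * Q.pairing j i := by
    have := Q.coxeterWeight_nonneg (Q.posRootForm ℤ) i j
    have h' : (0:ℝ) ≤ algebraMap ℤ ℝ (Q.coxeterWeightIn ℤ i j) := by
      rw [algebraMap_int_eq, eq_intCast]; exact_mod_cast this
    rw [Q.algebraMap_coxeterWeightIn] at h'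
    simpa [RootPairing.coxeterWeight] using h'
  have hqne0 : z j i ≠ 0 := by
    intro hh
    have : Q.pairing j i = 0 := by rw [← hz j i, hh]; norm_num
    have : Q.pairing i j = 0 := (Q.pairing_eq_zero_iff (i := i) (j := j)).mpr this
    exact hzne0 (by exact_mod_cast (hz i j).trans this)
  -- integer bounds
  have hmulR : (↑(z i j * z j i) : ℝ) = Q.pairing i j * Q.pairing j i := by
    push_cast [hz i j, hz j i]; ring
  have hmul_lt : z i j * z j i < 4 := by exact_mod_cast hmulR ▸ hcs
  have hmul_nn : 0 ≤ z i j * z j i := by exact_mod_cast hmulR ▸ hnn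
  -- one of the two pairings is ±1
  have habs : (z i j).natAbs = 1 ∨ (z j i).natAbs = 1 := by
    by_contra hno
    push_neg at hno
    have h1 : 2 ≤ (z i j).natAbs := by
      rcases Nat.lt_or_ge (z i j).natAbs 2 with hlt | hge
      · interval_cases hh : (z i j).natAbs <;> simp_all [Int.natAbs_eq_zero]
      · exact hge
    have h2 : 2 ≤ (z j i).natAbs := by
      rcases Nat.lt_or_ge (z j i).natAbs 2 with hlt | hge
      · interval_cases hh : (z j i).natAbs <;> simp_all [Int.natAbs_eq_zero]
      · exact hge
    have h4 : 4 ≤ (z i j).natAbs * (z j i).natAbs := Nat.mul_le_mul h1 h2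
    rw [← Int.natAbs_mul] at h4
    have : (z i j * z j i).natAbs ≤ 3 := by omega
    omega
  -- produce an index k with root k = ±αᵢ ± αⱼ
  have hkey : ∃ (k : ι) (u v : ℤ), Odd u ∧ Odd v ∧
      Q.root k = (u : ℝ) • Q.root i + (v : ℝ) • Q.root j := by
    rcases habs with hone | hone
    · -- pairing i j = ±1 : reflect i in j
      refine ⟨Q.reflectionPerm j i, 1, -(z i j), odd_one, ?_, ?_⟩
      · rcases Int.natAbs_eq_iff.mp hone with hh | hh <;> rw [hh] <;> norm_num
      · rw [Q.root_reflectionPerm, Q.reflection_apply_root, ← hz i j]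
        push_cast
        module
    · -- pairing j i = ±1 : reflect j in i
      refine ⟨Q.reflectionPerm i j, -(z j i), 1, ?_, odd_one, ?_⟩
      · rcases Int.natAbs_eq_iff.mp hone with hh | hh <;> rw [hh] <;> norm_num
      · rw [Q.root_reflectionPerm, Q.reflection_apply_root, ← hz j i]
        push_cast
        module
  obtain ⟨k, u, v, hu, hv, hk⟩ := hkey
  -- S k = u * S i + v * S j, an even integer: contradiction
  have hSkR : (S k : ℝ) = (u : ℝ) * (S i) + (v : ℝ) * (S j) := by
    rw [← hSsum k, ← hSsum i, ← hSsum j, Finset.mul_sum, Finset.mul_sum,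
      ← Finset.sum_add_distrib]
    refine Finset.sum_congr rfl fun t' _ => ?_
    rw [show Q.pairing k (β t') = Q.coroot' (β t') (Q.root k) from rfl, hk]
    simp only [map_add, map_smul, RootPairing.root_coroot'_eq_pairing, smul_eq_mul]
  have hSk : S k = u * S i + v * S j := by exact_mod_cast hSkR
  have heven : Even (S k) := by
    rw [hSk]
    exact (hu.mul (hodd i)).add_odd (hv.mul (hodd j))
  exact (Int.not_odd_iff_even.mpr heven) (hodd k)
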